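/- Let M = [[M_xx, M_xq],[M_qx, M_qq]] ∈ ℝ^{(2+k)×(2+k)} be symmetric positive definite in block form with M_xx ∈ ℝ^{2×2}, M_qq ∈ ℝ^{k×k}, M_qx = M_xqᵀ, let G = diag(0₂, G_qq) with G_qq ∈ ℝ^{k×k} invertible, and B = [I₂; 0_{k×2}]. Then rank[λ² M + G, B] = 2 + k for all λ ∈ ℂ if and only if rank[λ² M_qq + G_qq, M_qx] = k for all λ ∈ ℂ. -/

import Mathlib

open Matrix

lemma rank_eq_card_iff_surjective {m n : Type*} [Fintype m] [Fintype n]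
    (A : Matrix m n ℂ) :
    A.rank = Fintype.card m ↔ Function.Surjective A.mulVec := by
  have h1 : (LinearMap.range A.mulVecLin = ⊤) ↔ Function.Surjective A.mulVec := by
    rw [LinearMap.range_eq_top]; rfl
  constructor
  · intro h
    rw [← h1]
    apply Submodule.eq_top_of_finrank_eq
    rw [← Matrix.rank, h, Module.finrank_pi]
  · intro h
    rw [← h1] at h
    rw [Matrix.rank, h, finrank_top, Module.finrank_pi]

theorem controllability_reduction (k : ℕ)
    (Mxx : Matrix (Fin 2) (Fin 2) ℝ) (Mxq : Matrix (Fin 2) (Fin k) ℝ)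
    (Mqq Gqq : Matrix (Fin k) (Fin k) ℝ)
    (hMpos : (Matrix.fromBlocks Mxx Mxq Mxqᵀ Mqq).PosDef)
    (hGqq : IsUnit Gqq.det) :
    (∀ lam : ℂ,
      Matrix.rank (Matrix.fromCols
        (lam ^ 2 • (Matrix.fromBlocks Mxx Mxq Mxqᵀ Mqq).map Complex.ofReal +
          (Matrix.fromBlocks (0 : Matrix (Fin 2) (Fin 2) ℝ) 0 0 Gqq).map Complex.ofReal)
        ((Matrix.fromRows (1 : Matrix (Fin 2) (Fin 2) ℝ)
          (0 : Matrix (Fin k) (Fin 2) ℝ)).map Complex.ofReal)) = 2 + k)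
    ↔ (∀ lam : ℂ,
      Matrix.rank (Matrix.fromCols
        (lam ^ 2 • Mqq.map Complex.ofReal + Gqq.map Complex.ofReal)
        ((Mxqᵀ).map Complex.ofReal)) = k) := by
  set Mxx' : Matrix (Fin 2) (Fin 2) ℂ := Mxx.map Complex.ofReal with hMxx'
  set Mxq' : Matrix (Fin 2) (Fin k) ℂ := Mxq.map Complex.ofReal with hMxq'
  set Mqx' : Matrix (Fin k) (Fin 2) ℂ := (Mxqᵀ).map Complex.ofReal with hMqx'
  set Mqq' : Matrix (Fin k) (Fin k) ℂ := Mqq.map Complex.ofReal with hMqq'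
  set Gqq' : Matrix (Fin k) (Fin k) ℂ := Gqq.map Complex.ofReal with hGqq'
  -- Gqq' is invertible
  have hdet : IsUnit Gqq'.det := by
    have : Gqq'.det = (Gqq.det : ℂ) := (RingHom.map_det Complex.ofRealHom Gqq).symm
    rw [this]
    simpa [isUnit_iff_ne_zero, Complex.ofReal_ne_zero] using hGqq.ne_zero
  -- rewrite the big matrix in block form
  have hbig : ∀ lam : ℂ,
      (lam ^ 2 • (Matrix.fromBlocks Mxx Mxq Mxqᵀ Mqq).map Complex.ofReal +
          (Matrix.fromBlocks (0 : Matrix (Fin 2) (Fin 2) ℝ) 0 0 Gqq).map Complex.ofReal)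
      = Matrix.fromBlocks (lam ^ 2 • Mxx') (lam ^ 2 • Mxq') (lam ^ 2 • Mqx')
          (lam ^ 2 • Mqq' + Gqq') := by
    intro lam
    rw [fromBlocks_map, fromBlocks_map, fromBlocks_smul, fromBlocks_add]
    congr 1 <;> simp [Matrix.map_zero] <;> rfl
  have hrows : (Matrix.fromRows (1 : Matrix (Fin 2) (Fin 2) ℝ)
        (0 : Matrix (Fin k) (Fin 2) ℝ)).map Complex.ofReal
      = Matrix.fromRows (1 : Matrix (Fin 2) (Fin 2) ℂ) (0 : Matrix (Fin k) (Fin 2) ℂ) := by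
    ext (i | i) j <;>
      simp [Matrix.fromRows_apply_inl, Matrix.fromRows_apply_inr, Matrix.one_apply, apply_ite Complex.ofReal]
  -- characterization of the big rank condition
  have key1 : ∀ lam : ℂ,
      (Matrix.rank (Matrix.fromCols
        (lam ^ 2 • (Matrix.fromBlocks Mxx Mxq Mxqᵀ Mqq).map Complex.ofReal +
          (Matrix.fromBlocks (0 : Matrix (Fin 2) (Fin 2) ℝ) 0 0 Gqq).map Complex.ofReal)
        ((Matrix.fromRows (1 : Matrix (Fin 2) (Fin 2) ℝ)
          (0 : Matrix (Fin k) (Fin 2) ℝ)).map Complex.ofReal)) = 2 + k)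
      ↔ ∀ b : Fin k → ℂ, ∃ x : Fin 2 → ℂ, ∃ q : Fin k → ℂ,
          lam ^ 2 • (Mqx' *ᵥ x) + (lam ^ 2 • Mqq' + Gqq') *ᵥ q = b := by
    intro lam
    rw [hbig, hrows]
    have hiff := rank_eq_card_iff_surjective (Matrix.fromCols
      (Matrix.fromBlocks (lam ^ 2 • Mxx') (lam ^ 2 • Mxq') (lam ^ 2 • Mqx')
        (lam ^ 2 • Mqq' + Gqq'))
      (Matrix.fromRows (1 : Matrix (Fin 2) (Fin 2) ℂ) (0 : Matrix (Fin k) (Fin 2) ℂ)))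
    simp only [Fintype.card_sum, Fintype.card_fin] at hiff
    rw [hiff]
    constructor
    · intro hs b
      obtain ⟨v, hv⟩ := hs (Sum.elim 0 b)
      refine ⟨v ∘ Sum.inl ∘ Sum.inl, v ∘ Sum.inl ∘ Sum.inr, ?_⟩
      have hv2 : v = Sum.elim (Sum.elim (v ∘ Sum.inl ∘ Sum.inl) (v ∘ Sum.inl ∘ Sum.inr))
          (v ∘ Sum.inr) := by
        funext i
        rcases i with (i | i) | i <;> rfl
      rw [hv2] at hv
      funext i
      have := congrFun hv (Sum.inr i)
      simpa [fromCols_mulVec_sumElim, fromBlocks_mulVec, smul_mulVec] using this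
    · intro hP w
      obtain ⟨x, q, h⟩ := hP (w ∘ Sum.inr)
      refine ⟨Sum.elim (Sum.elim x q)
        (w ∘ Sum.inl - (lam ^ 2 • (Mxx' *ᵥ x) + lam ^ 2 • (Mxq' *ᵥ q))), ?_⟩
      funext i
      rcases i with i | i
      · simp [fromCols_mulVec_sumElim, fromBlocks_mulVec, smul_mulVec]
        fin_cases i <;> simp [vecHead, vecTail]
      · have := congrFun h i
        simpa [fromCols_mulVec_sumElim, fromBlocks_mulVec, smul_mulVec] using this
  -- characterization of the small rank condition
  have key2 : ∀ lam : ℂ,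
      (Matrix.rank (Matrix.fromCols (lam ^ 2 • Mqq' + Gqq') Mqx') = k)
      ↔ ∀ b : Fin k → ℂ, ∃ q : Fin k → ℂ, ∃ x : Fin 2 → ℂ,
          (lam ^ 2 • Mqq' + Gqq') *ᵥ q + Mqx' *ᵥ x = b := by
    intro lam
    have hiff := rank_eq_card_iff_surjective (Matrix.fromCols (lam ^ 2 • Mqq' + Gqq') Mqx')
    simp only [Fintype.card_fin] at hiff
    rw [hiff]
    constructor
    · intro hs b
      obtain ⟨v, hv⟩ := hs b
      refine ⟨v ∘ Sum.inl, v ∘ Sum.inr, ?_⟩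
      have hv2 : v = Sum.elim (v ∘ Sum.inl) (v ∘ Sum.inr) := by
        funext i; rcases i with i | i <;> rfl
      rw [hv2, fromCols_mulVec_sumElim] at hv
      exact hv
    · intro hQ b
      obtain ⟨q, x, h⟩ := hQ b
      exact ⟨Sum.elim q x, by rw [fromCols_mulVec_sumElim]; exact h⟩
  simp only [key1, key2]
  -- now prove the pointwise equivalence
  constructor
  · intro H lam b
    obtain ⟨x, q, h⟩ := H lam b
    refine ⟨q, lam ^ 2 • x, ?_⟩
    rw [mulVec_smul, add_comm]
    exact h
  · intro H lam b
    by_cases hlam : lam = 0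
    · subst hlam
      refine ⟨0, Gqq'⁻¹ *ᵥ b, ?_⟩
      simp [mulVec_mulVec, Matrix.mul_nonsing_inv _ hdet]
    · obtain ⟨q, x, h⟩ := H lam b
      refine ⟨(lam ^ 2)⁻¹ • x, q, ?_⟩
      rw [mulVec_smul, smul_smul, mul_inv_cancel₀ (pow_ne_zero _ hlam), one_smul, add_comm]
      exact h
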